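/- Let A be the Arnold algebra Λ[x_{ij} : 1 ≤ i ≠ j ≤ n]/(x_{ij} = x_{ji}, Arnold relations) with generators in odd degree. Then the quotient A/(x_{12}) is, as a graded abelian group, isomorphic to the subalgebra Y of A generated by {y_{ij} = x_{ij} - x_{12} : {i,j} ≠ {1,2}}, via the composition Y ↪ A ↠ A/(x_{12}). -/

import Mathlib

open ExteriorAlgebra

/-- Unordered pairs of distinct indices in `Fin n`, indexing the generators `x_{ij}`
(this builds in the relation `x_{ij} = x_{ji}`). -/
abbrev ConfPair (n : ℕ) := {p : Sym2 (Fin n) // ¬ p.IsDiag}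

/-- The generator `x_{ij}` of the exterior algebra over `ℤ` on the free module with
basis the unordered pairs `{i,j}`, `i ≠ j` (it is `0` when `i = j`). -/
noncomputable def exGen (n : ℕ) (i j : Fin n) :
    ExteriorAlgebra ℤ (ConfPair n →₀ ℤ) :=
  if h : i = j then 0
  else ExteriorAlgebra.ι ℤ (Finsupp.single ⟨s(i, j), by simpa using h⟩ 1)

/-- The Arnold relations `x_{ij} x_{jk} + x_{jk} x_{ki} + x_{ki} x_{ij} = 0` for
pairwise distinct `i, j, k`. -/
inductive ArnoldRel (n : ℕ) :
    ExteriorAlgebra ℤ (ConfPair n →₀ ℤ) → ExteriorAlgebra ℤ (ConfPair n →₀ ℤ) → Prop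
  | arnold (i j k : Fin n) (hij : i ≠ j) (hjk : j ≠ k) (hki : k ≠ i) :
      ArnoldRel n
        (exGen n i j * exGen n j k + exGen n j k * exGen n k i + exGen n k i * exGen n i j) 0

/-- The Arnold algebra `A = Λ[x_{ij} : 1 ≤ i ≠ j ≤ n] / (x_{ij} = x_{ji}, Arnold relations)`,
the cohomology ring of `Conf_n(ℂ^d)` (with generators in degree `2d-1`). -/
abbrev ArnoldAlgebra (n : ℕ) := RingQuot (ArnoldRel n)

/-- The class `x_{ij}` in the Arnold algebra. -/
noncomputable def xcl (n : ℕ) (i j : Fin n) : ArnoldAlgebra n :=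
  RingQuot.mkAlgHom ℤ (ArnoldRel n) (exGen n i j)

/-- The `ℤ`-submodule of the Arnold algebra spanned by the generators `x_{ij}`; its `m`-th
power is the degree `m(2d-1)` homogeneous part. -/
noncomputable def xSpan (n : ℕ) : Submodule ℤ (ArnoldAlgebra n) :=
  Submodule.span ℤ {a | ∃ i j, i ≠ j ∧ a = xcl n i j}


/-- The subalgebra `Y` of the Arnold algebra generated by the elements
`y_{ij} = x_{ij} - x_{12}` for `{i,j} ≠ {1,2}` (indices `1, 2` are realized as
`0, 1 : Fin n`). -/
noncomputable def Ysub (n : ℕ) (hn : 1 < n) : Subring (ArnoldAlgebra n) :=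
  Subring.closure {a | ∃ i j : Fin n, i ≠ j ∧
    s(i, j) ≠ s((⟨0, by omega⟩ : Fin n), ⟨1, hn⟩) ∧
    a = xcl n i j - xcl n ⟨0, by omega⟩ ⟨1, hn⟩}

/-- The (additive group underlying the) two-sided ideal of the Arnold algebra
generated by `x_{12}`. -/
noncomputable def x12Ideal (n : ℕ) (hn : 1 < n) : AddSubgroup (ArnoldAlgebra n) :=
  AddSubgroup.closure
    {c | ∃ a b : ArnoldAlgebra n, c = a * xcl n ⟨0, by omega⟩ ⟨1, hn⟩ * b}

namespace ArnoldAux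

variable (n : ℕ) (hn : 1 < n)

noncomputable def z0 : Fin n := ⟨0, by omega⟩
noncomputable def z1 : Fin n := ⟨1, hn⟩

lemma z0_ne_z1 : z0 n hn ≠ z1 n hn := by
  simp [z0, z1, Fin.ext_iff]

noncomputable def q : ConfPair n :=
  ⟨s(z0 n hn, z1 n hn), by simpa using z0_ne_z1 n hn⟩

noncomputable def π : ExteriorAlgebra ℤ (ConfPair n →₀ ℤ) →ₐ[ℤ] ArnoldAlgebra n :=
  RingQuot.mkAlgHom ℤ (ArnoldRel n)

noncomputable def fmap : (ConfPair n →₀ ℤ) →ₗ[ℤ] (ConfPair n →₀ ℤ) :=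
  LinearMap.id - (Finsupp.lsingle (q n hn)) ∘ₗ (Finsupp.lsum ℤ fun _ => LinearMap.id)

lemma fmap_single (p : ConfPair n) (c : ℤ) :
    fmap n hn (Finsupp.single p c) = Finsupp.single p c - Finsupp.single (q n hn) c := by
  simp [fmap]

lemma sub_fmap (m : ConfPair n →₀ ℤ) :
    m - fmap n hn m = Finsupp.single (q n hn) (Finsupp.lsum ℤ (fun _ => (LinearMap.id : ℤ →ₗ[ℤ] ℤ)) m) := by
  simp [fmap, sub_sub_cancel]

lemma pi_ι_single (i j : Fin n) (hij : i ≠ j) (hd : ¬ (s(i,j)).IsDiag) :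
    π n (ExteriorAlgebra.ι ℤ (Finsupp.single (⟨s(i,j), hd⟩ : ConfPair n) 1)) = xcl n i j := by
  rw [xcl, exGen, dif_neg hij]
  rfl


noncomputable def φ₀ : ExteriorAlgebra ℤ (ConfPair n →₀ ℤ) →ₐ[ℤ] ExteriorAlgebra ℤ (ConfPair n →₀ ℤ) :=
  ExteriorAlgebra.lift ℤ ⟨(ExteriorAlgebra.ι ℤ).comp (fmap n hn), fun m => by
    simp [ι_sq_zero]⟩

noncomputable def ψ : ExteriorAlgebra ℤ (ConfPair n →₀ ℤ) →ₐ[ℤ] ArnoldAlgebra n :=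
  (π n).comp (φ₀ n hn)

lemma psi_exGen {i j : Fin n} (hij : i ≠ j) :
    ψ n hn (exGen n i j) = xcl n i j - xcl n (z0 n hn) (z1 n hn) := by
  rw [exGen, dif_neg hij]
  show π n (φ₀ n hn (ExteriorAlgebra.ι ℤ _)) = _
  rw [φ₀, ExteriorAlgebra.lift_ι_apply, LinearMap.comp_apply, fmap_single, map_sub, map_sub,
    pi_ι_single n i j hij, q, pi_ι_single n (z0 n hn) (z1 n hn) (z0_ne_z1 n hn)]

lemma xcl_anticomm {i j a b : Fin n} (hij : i ≠ j) (hab : a ≠ b) :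
    xcl n i j * xcl n a b + xcl n a b * xcl n i j = 0 := by
  unfold xcl exGen
  rw [← map_mul (RingQuot.mkAlgHom ℤ (ArnoldRel n)), ← map_mul (RingQuot.mkAlgHom ℤ (ArnoldRel n)),
    ← map_add (RingQuot.mkAlgHom ℤ (ArnoldRel n)), dif_neg hij, dif_neg hab, ι_add_mul_swap, map_zero]

lemma xcl_sq {i j : Fin n} (hij : i ≠ j) : xcl n i j * xcl n i j = 0 := by
  unfold xcl exGen
  rw [← map_mul (RingQuot.mkAlgHom ℤ (ArnoldRel n)), dif_neg hij, ι_sq_zero, map_zero]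

lemma arnold_in_A {i j k : Fin n} (hij : i ≠ j) (hjk : j ≠ k) (hki : k ≠ i) :
    xcl n i j * xcl n j k + xcl n j k * xcl n k i + xcl n k i * xcl n i j = 0 := by
  have := RingQuot.mkAlgHom_rel ℤ (ArnoldRel.arnold i j k hij hjk hki)
  simpa [map_add, map_mul, xcl] using this

lemma key {R : Type*} [Ring R] (a b c t : R)
    (ha : a*t + t*a = 0) (hb : b*t + t*b = 0) (hc : c*t + t*c = 0) (ht : t*t = 0)
    (habc : a*b + b*c + c*a = 0) :
    (a - t)*(b - t) + (b - t)*(c - t) + (c - t)*(a - t) = 0 := by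
  have ha' : a*t = -(t*a) := eq_neg_of_add_eq_zero_left ha
  have hb' : b*t = -(t*b) := eq_neg_of_add_eq_zero_left hb
  have hc' : c*t = -(t*c) := eq_neg_of_add_eq_zero_left hc
  have expand : (a - t)*(b - t) + (b - t)*(c - t) + (c - t)*(a - t)
      = (a*b + b*c + c*a) - (a*t) - (t*b) - (b*t) - (t*c) - (c*t) - (t*a)
        + (t*t + t*t + t*t) := by noncomm_ring
  rw [expand, habc, ht, ha', hb', hc']
  abel

lemma psi_rel : ∀ x y, ArnoldRel n x y → ψ n hn x = ψ n hn y := by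
  rintro _ _ ⟨i, j, k, hij, hjk, hki⟩
  rw [map_zero, map_add, map_add, map_mul, map_mul, map_mul,
    psi_exGen n hn hij, psi_exGen n hn hjk, psi_exGen n hn hki]
  exact key _ _ _ _
    (xcl_anticomm n hij (z0_ne_z1 n hn)) (xcl_anticomm n hjk (z0_ne_z1 n hn))
    (xcl_anticomm n hki (z0_ne_z1 n hn)) (xcl_sq n (z0_ne_z1 n hn))
    (arnold_in_A n hij hjk hki)

noncomputable def φ : ArnoldAlgebra n →ₐ[ℤ] ArnoldAlgebra n :=
  RingQuot.liftAlgHom ℤ ⟨ψ n hn, psi_rel n hn⟩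

lemma phi_pi (x : ExteriorAlgebra ℤ (ConfPair n →₀ ℤ)) :
    φ n hn (π n x) = π n (φ₀ n hn x) :=
  RingQuot.liftAlgHom_mkAlgHom_apply ℤ _ _ _

lemma phi_xcl {i j : Fin n} (hij : i ≠ j) :
    φ n hn (xcl n i j) = xcl n i j - xcl n (z0 n hn) (z1 n hn) := by
  rw [xcl]
  rw [show RingQuot.mkAlgHom ℤ (ArnoldRel n) = π n from rfl, phi_pi]
  exact psi_exGen n hn hij


lemma xcl_congr {i j a b : Fin n} (hij : i ≠ j) (hab : a ≠ b) (h : s(i,j) = s(a,b)) :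
    xcl n i j = xcl n a b := by
  unfold xcl exGen
  rw [dif_neg hij, dif_neg hab]
  have e : (⟨s(i,j), by simpa using hij⟩ : ConfPair n) = ⟨s(a,b), by simpa using hab⟩ :=
    Subtype.ext h
  rw [e]

lemma pi_ι_single' (i j : Fin n) (hij : i ≠ j) (hd : ¬ (s(i,j)).IsDiag) (c : ℤ) :
    π n (ExteriorAlgebra.ι ℤ (Finsupp.single (⟨s(i,j), hd⟩ : ConfPair n) c)) = c • xcl n i j := by
  have e : Finsupp.single (⟨s(i,j), hd⟩ : ConfPair n) c
      = c • Finsupp.single (⟨s(i,j), hd⟩ : ConfPair n) (1 : ℤ) := by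
    rw [Finsupp.smul_single, smul_eq_mul, mul_one]
  rw [e, map_smul, map_smul, pi_ι_single n i j hij hd]

lemma pi_ι_single_q (c : ℤ) :
    π n (ExteriorAlgebra.ι ℤ (Finsupp.single (q n hn) c))
      = c • xcl n (z0 n hn) (z1 n hn) :=
  pi_ι_single' n (z0 n hn) (z1 n hn) (z0_ne_z1 n hn) _ c

lemma sym2_cases {β : Type*} (pp : Sym2 β) : ∃ i j, pp = s(i,j) :=
  Sym2.ind (fun i j => ⟨i, j, rfl⟩) pp
end ArnoldAux

namespace ArnoldAux

variable (n : ℕ) (hn : 1 < n)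

lemma phi_mem (a : ArnoldAlgebra n) : φ n hn a ∈ Ysub n hn := by
  obtain ⟨e, rfl⟩ := RingQuot.mkAlgHom_surjective ℤ (ArnoldRel n) a
  induction e using ExteriorAlgebra.induction with
  | algebraMap r =>
      simp only [AlgHom.commutes]
      rw [eq_intCast]
      simpa using intCast_mem (Ysub n hn) r
  | ι m =>
      show φ n hn (π n (ExteriorAlgebra.ι ℤ m)) ∈ _
      rw [phi_pi, φ₀, ExteriorAlgebra.lift_ι_apply, LinearMap.comp_apply]
      induction m using Finsupp.induction with
      | zero => simp only [map_zero]; exact zero_mem _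
      | single_add p c f hp hc ih =>
          rw [map_add, map_add, map_add]
          refine add_mem ?_ ih
          obtain ⟨pp, hd⟩ := p
          obtain ⟨i, j, rfl⟩ := sym2_cases pp
          have hij : i ≠ j := by simpa using hd
          rw [fmap_single, map_sub, map_sub, pi_ι_single' n i j hij hd c, pi_ι_single_q n hn c,
            ← smul_sub]
          by_cases h : s(i, j) = s(z0 n hn, z1 n hn)
          · rw [xcl_congr n hij (z0_ne_z1 n hn) h, sub_self, smul_zero]
            exact zero_mem _
          · exact zsmul_mem (Subring.subset_closure (by exact ⟨i, j, hij, h, rfl⟩)) c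
  | mul x y hx hy => rw [map_mul, map_mul]; exact mul_mem hx hy
  | add x y hx hy => rw [map_add, map_add]; exact add_mem hx hy

lemma phi_fix (y : ArnoldAlgebra n) (hy : y ∈ Ysub n hn) : φ n hn y = y := by
  refine Subring.closure_induction (p := fun x _ => φ n hn x = x) ?_ ?_ ?_ ?_ ?_ ?_ hy
  · rintro x ⟨i, j, hij, hs, rfl⟩
    show φ n hn (xcl n i j - xcl n (z0 n hn) (z1 n hn)) = xcl n i j - xcl n (z0 n hn) (z1 n hn)
    rw [map_sub, phi_xcl n hn hij, phi_xcl n hn (z0_ne_z1 n hn), sub_self, sub_zero]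
  · exact map_zero _
  · exact map_one _
  · intro x y _ _ hx hy; rw [map_add, hx, hy]
  · intro x _ hx; rw [map_neg, hx]
  · intro x y _ _ hx hy; rw [map_mul, hx, hy]

lemma phi_x12 : φ n hn (xcl n (z0 n hn) (z1 n hn)) = 0 := by
  rw [phi_xcl n hn (z0_ne_z1 n hn), sub_self]

lemma phi_ideal (c : ArnoldAlgebra n) (hc : c ∈ x12Ideal n hn) : φ n hn c = 0 := by
  refine AddSubgroup.closure_induction (p := fun x _ => φ n hn x = 0) ?_ ?_ ?_ ?_ hc
  · rintro x ⟨a, b, rfl⟩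
    show φ n hn (a * xcl n (z0 n hn) (z1 n hn) * b) = 0
    rw [map_mul, map_mul, phi_x12, mul_zero, zero_mul]
  · exact map_zero _
  · intro x y _ _ hx hy; rw [map_add, hx, hy, add_zero]
  · intro x _ hx; rw [map_neg, hx, neg_zero]

lemma x12_mem : xcl n (z0 n hn) (z1 n hn) ∈ x12Ideal n hn := by
  refine AddSubgroup.subset_closure ⟨1, 1, ?_⟩
  rw [one_mul, mul_one]
  rfl

lemma ideal_mul_right (r : ArnoldAlgebra n) {c : ArnoldAlgebra n} (hc : c ∈ x12Ideal n hn) :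
    c * r ∈ x12Ideal n hn := by
  refine AddSubgroup.closure_induction (p := fun x _ => x * r ∈ x12Ideal n hn) ?_ ?_ ?_ ?_ hc
  · rintro x ⟨a, b, rfl⟩
    exact AddSubgroup.subset_closure ⟨a, b * r, by noncomm_ring⟩
  · show (0 : ArnoldAlgebra n) * r ∈ _
    rw [zero_mul]; exact zero_mem _
  · intro x y _ _ hx hy
    show (x + y) * r ∈ _
    rw [add_mul]; exact add_mem hx hy
  · intro x _ hx
    show (-x) * r ∈ _
    rw [neg_mul]; exact neg_mem hx

lemma ideal_mul_left (r : ArnoldAlgebra n) {c : ArnoldAlgebra n} (hc : c ∈ x12Ideal n hn) :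
    r * c ∈ x12Ideal n hn := by
  refine AddSubgroup.closure_induction (p := fun x _ => r * x ∈ x12Ideal n hn) ?_ ?_ ?_ ?_ hc
  · rintro x ⟨a, b, rfl⟩
    exact AddSubgroup.subset_closure ⟨r * a, b, by noncomm_ring⟩
  · show r * (0 : ArnoldAlgebra n) ∈ _
    rw [mul_zero]; exact zero_mem _
  · intro x y _ _ hx hy
    show r * (x + y) ∈ _
    rw [mul_add]; exact add_mem hx hy
  · intro x _ hx
    show r * (-x) ∈ _
    rw [mul_neg]; exact neg_mem hx

lemma diff_mem (a : ArnoldAlgebra n) : a - φ n hn a ∈ x12Ideal n hn := by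
  obtain ⟨e, rfl⟩ := RingQuot.mkAlgHom_surjective ℤ (ArnoldRel n) a
  induction e using ExteriorAlgebra.induction with
  | algebraMap r => simp only [AlgHom.commutes, sub_self]; exact zero_mem _
  | ι m =>
      show π n (ExteriorAlgebra.ι ℤ m) - φ n hn (π n (ExteriorAlgebra.ι ℤ m)) ∈ _
      rw [phi_pi, φ₀, ExteriorAlgebra.lift_ι_apply, LinearMap.comp_apply, ← map_sub, ← map_sub,
        sub_fmap, pi_ι_single_q n hn]
      exact zsmul_mem (x12_mem n hn) _
  | mul x y hx hy =>
      show π n (x * y) - φ n hn (π n (x * y)) ∈ _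
      have e : π n (x * y) - φ n hn (π n (x * y))
          = (π n x - φ n hn (π n x)) * π n y + φ n hn (π n x) * (π n y - φ n hn (π n y)) := by
        rw [map_mul, map_mul]
        noncomm_ring
      rw [e]
      exact add_mem (ideal_mul_right n hn _ hx) (ideal_mul_left n hn _ hy)
  | add x y hx hy =>
      show π n (x + y) - φ n hn (π n (x + y)) ∈ _
      rw [map_add, map_add, add_sub_add_comm]
      exact add_mem hx hy

end ArnoldAux

/-- For the Arnold algebra `A`, the quotient `A/(x_{12})` by the
two-sided ideal generated by `x_{12}` is, as a (graded) abelian group, isomorphic to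
the subalgebra `Y` generated by the `y_{ij} = x_{ij} - x_{12}`, via the composite
`Y ↪ A ↠ A/(x_{12})` — i.e. this composite is bijective. -/
theorem arnold_quotient_by_x12_iso_Y (n : ℕ) (hn : 1 < n) :
    Function.Bijective
      (fun y : Ysub n hn => QuotientAddGroup.mk' (x12Ideal n hn) (y : ArnoldAlgebra n)) := by
  constructor
  · intro y1 y2 h
    obtain ⟨z, hz, hz2⟩ := (QuotientAddGroup.mk'_eq_mk' (x12Ideal n hn)).mp h
    have hzY : z ∈ Ysub n hn := by
      have e : z = (y2 : ArnoldAlgebra n) - (y1 : ArnoldAlgebra n) := by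
        rw [← hz2]; abel
      rw [e]
      exact sub_mem y2.2 y1.2
    have h0 : z = 0 := by
      rw [← ArnoldAux.phi_fix n hn z hzY]
      exact ArnoldAux.phi_ideal n hn z hz
    apply Subtype.ext
    rw [← hz2, h0, add_zero]
  · intro b
    obtain ⟨a, rfl⟩ := QuotientAddGroup.mk'_surjective (x12Ideal n hn) b
    refine ⟨⟨ArnoldAux.φ n hn a, ArnoldAux.phi_mem n hn a⟩, ?_⟩
    rw [QuotientAddGroup.mk'_eq_mk' (x12Ideal n hn)]
    exact ⟨a - ArnoldAux.φ n hn a, ArnoldAux.diff_mem n hn a, by abel⟩
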